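/- Let M_u be a symmetric positive definite real n×n matrix, M_p a symmetric positive definite real m×m matrix, F a real n×n matrix, and B a real m×n matrix such that B M_u⁻¹ Bᵀ is invertible. Define F_p = M_p (B M_u⁻¹ Bᵀ)⁻¹ (B M_u⁻¹ F M_u⁻¹ Bᵀ). Then for every j ∈ {1, …, m}, the j-th column of F_p is the unique minimizer over x ∈ ℝᵐ of the weighted least-squares functional ‖(M_u⁻¹ F M_u⁻¹ Bᵀ) e_j − (M_u⁻¹ Bᵀ M_p⁻¹) x‖_{M_u}, where ‖v‖_{M_u} = (vᵀ M_u v)^{1/2} and e_j is the j-th standard basis vector of ℝᵐ. -/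

import Mathlib

open Matrix

/-- The weighted norm `‖v‖_M = (vᵀ M v)^(1/2)`. -/
noncomputable def weightedNorm {n : ℕ} (M : Matrix (Fin n) (Fin n) ℝ)
    (v : Fin n → ℝ) : ℝ :=
  Real.sqrt (v ⬝ᵥ (M *ᵥ v))

/-- Each column of the LSC choice of `F_p` is the unique minimizer of the
columnwise weighted least-squares problem for the discrete adjoint commutator. -/
theorem lsc_column_least_squares {n m : ℕ}
    (Mu F : Matrix (Fin n) (Fin n) ℝ) (hMu : Mu.PosDef)
    (Mp : Matrix (Fin m) (Fin m) ℝ) (hMp : Mp.PosDef)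
    (B : Matrix (Fin m) (Fin n) ℝ) (hBB : IsUnit (B * Mu⁻¹ * Bᵀ))
    (Fp : Matrix (Fin m) (Fin m) ℝ)
    (hFp : Fp = Mp * (B * Mu⁻¹ * Bᵀ)⁻¹ * (B * Mu⁻¹ * F * Mu⁻¹ * Bᵀ)) :
    ∀ j : Fin m, ∀ x : Fin m → ℝ, x ≠ (fun i => Fp i j) →
      weightedNorm Mu
          ((Mu⁻¹ * F * Mu⁻¹ * Bᵀ) *ᵥ Pi.single j 1 -
            (Mu⁻¹ * Bᵀ * Mp⁻¹) *ᵥ (fun i => Fp i j)) <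
        weightedNorm Mu
          ((Mu⁻¹ * F * Mu⁻¹ * Bᵀ) *ᵥ Pi.single j 1 -
            (Mu⁻¹ * Bᵀ * Mp⁻¹) *ᵥ x) := by
  intro j x hx
  -- basic invertibility facts
  have hMuD : IsUnit Mu.det := hMu.det_pos.ne'.isUnit
  have hMpD : IsUnit Mp.det := hMp.det_pos.ne'.isUnit
  have hCD : IsUnit (B * Mu⁻¹ * Bᵀ).det := (isUnit_iff_isUnit_det _).mp hBB
  have hMuT : Muᵀ = Mu := hMu.1.eq
  have hMpT : Mpᵀ = Mp := hMp.1.eq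
  set A : Matrix (Fin n) (Fin m) ℝ := Mu⁻¹ * Bᵀ * Mp⁻¹ with hA
  -- transpose of A
  have hAT : Aᵀ = Mp⁻¹ * B * Mu⁻¹ := by
    simp [hA, transpose_mul, transpose_nonsing_inv, hMuT, hMpT, Matrix.mul_assoc]
  -- normal equations at matrix level
  have hCD' : IsUnit (B * (Mu⁻¹ * Bᵀ)).det := by rw [← Matrix.mul_assoc]; exact hCD
  have hC2 : ∀ X : Matrix (Fin m) (Fin m) ℝ,
      B * (Mu⁻¹ * (Bᵀ * ((B * (Mu⁻¹ * Bᵀ))⁻¹ * X))) = X := by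
    intro X
    rw [← Matrix.mul_assoc Mu⁻¹ Bᵀ _, ← Matrix.mul_assoc B _ _,
      Matrix.mul_nonsing_inv_cancel_left _ _ hCD']
  have hnorm : Aᵀ * Mu * (Mu⁻¹ * F * Mu⁻¹ * Bᵀ - A * Fp) = 0 := by
    rw [Matrix.mul_sub, sub_eq_zero, hAT, hA, hFp]
    simp only [Matrix.mul_assoc, Matrix.nonsing_inv_mul_cancel_left _ _ hMuD,
      Matrix.nonsing_inv_mul_cancel_left _ _ hMpD, hC2]
  -- vector-level objects
  set e : Fin m → ℝ := Pi.single j 1 with he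
  set xs : Fin m → ℝ := fun i => Fp i j with hxs
  have hxcol : xs = Fp *ᵥ e := by
    funext i; simp [hxs, he, Matrix.mulVec_single]
  set b : Fin n → ℝ := (Mu⁻¹ * F * Mu⁻¹ * Bᵀ) *ᵥ e with hb
  set r : Fin n → ℝ := b - A *ᵥ xs with hr
  have hrm : r = (Mu⁻¹ * F * Mu⁻¹ * Bᵀ - A * Fp) *ᵥ e := by
    rw [hr, hb, hxcol, Matrix.mulVec_mulVec, Matrix.sub_mulVec]
  have hAr : (Aᵀ * Mu) *ᵥ r = 0 := by
    rw [hrm, Matrix.mulVec_mulVec, hnorm, Matrix.zero_mulVec]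
  set d : Fin m → ℝ := xs - x with hd
  have hdne : d ≠ 0 := sub_ne_zero_of_ne (Ne.symm hx)
  set w : Fin n → ℝ := A *ᵥ d with hw
  -- w ≠ 0 via a left inverse of A
  have hC3 : ∀ X : Matrix (Fin m) (Fin m) ℝ,
      (B * (Mu⁻¹ * Bᵀ))⁻¹ * (B * (Mu⁻¹ * (Bᵀ * X))) = X := by
    intro X
    rw [show B * (Mu⁻¹ * (Bᵀ * X)) = (B * (Mu⁻¹ * Bᵀ)) * X by simp [Matrix.mul_assoc],
      Matrix.nonsing_inv_mul_cancel_left _ _ hCD']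
  have hLA : (Mp * (B * Mu⁻¹ * Bᵀ)⁻¹ * B) * A = 1 := by
    rw [hA]
    simp only [Matrix.mul_assoc, hC3, Matrix.mul_nonsing_inv _ hMpD]
  have hwne : w ≠ 0 := by
    intro h0
    apply hdne
    have := congrArg (fun v => (Mp * (B * Mu⁻¹ * Bᵀ)⁻¹ * B) *ᵥ v) h0
    simpa [hw, Matrix.mulVec_mulVec, hLA] using this
  -- cross terms vanish
  have hcross1 : r ⬝ᵥ (Mu *ᵥ w) = 0 := by
    rw [hw, Matrix.mulVec_mulVec, Matrix.dotProduct_mulVec]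
    have : r ᵥ* (Mu * A) = (Aᵀ * Mu) *ᵥ r := by
      rw [← Matrix.mulVec_transpose, Matrix.transpose_mul, hMuT]
    rw [this, hAr, zero_dotProduct]
  have hcross2 : w ⬝ᵥ (Mu *ᵥ r) = 0 := by
    rw [Matrix.dotProduct_mulVec, ← Matrix.mulVec_transpose, hMuT, dotProduct_comm]
    exact hcross1
  -- the goal
  have hgoal2 : b - A *ᵥ x = r + w := by
    rw [hr, hw, hd, Matrix.mulVec_sub]; abel
  have hexp : (r + w) ⬝ᵥ (Mu *ᵥ (r + w)) = r ⬝ᵥ (Mu *ᵥ r) + w ⬝ᵥ (Mu *ᵥ w) := by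
    rw [Matrix.mulVec_add, dotProduct_add, add_dotProduct, add_dotProduct, hcross1, hcross2]
    ring
  have hrpos : 0 ≤ r ⬝ᵥ (Mu *ᵥ r) := by simpa using hMu.posSemidef.dotProduct_mulVec_nonneg r
  have hwpos : 0 < w ⬝ᵥ (Mu *ᵥ w) := by simpa using hMu.dotProduct_mulVec_pos hwne
  show weightedNorm Mu (b - A *ᵥ xs) < weightedNorm Mu (b - A *ᵥ x)
  rw [show b - A *ᵥ xs = r from rfl, hgoal2]
  unfold weightedNorm
  rw [hexp]
  exact Real.sqrt_lt_sqrt hrpos (by linarith)
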